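/- Let T : C(E) → C(E) be defined piecewise by (Tφ)(x,y) = s_{ij}(x,y)·(φ(L_{ij}⁻¹(x,y)) − g_{ij}(L_{ij}⁻¹(x,y))) + h_{ij}(x,y) on E_{ij}. If f is the fixed point of T and the functions h_{ij} interpolate the data (h_{ij}(x_a, y_b) = z_{ab} at the corners (x_a,y_b) of E_{ij}) and s_{ij} vanishes on ∂E_{ij}, then f(x_i, y_j) = z_{ij} at every grid point (x_i, y_j), i, j ranging over all grid indices. -/

import Mathlib

open Set

lemma exists_cast_or_succ {n : ℕ} (hn : 0 < n) (α : Fin (n + 1)) :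
    ∃ i : Fin n, α = i.castSucc ∨ α = i.succ := by
  rcases lt_or_ge (α : ℕ) n with hα | hα
  · exact ⟨⟨α, hα⟩, Or.inl (by ext; simp)⟩
  · have hα' : (α : ℕ) = n := le_antisymm (Nat.lt_succ_iff.mp α.isLt) hα
    refine ⟨⟨n - 1, Nat.sub_lt hn one_pos⟩, Or.inr ?_⟩
    ext
    simp only [Fin.val_succ]; omega

/-- If `f` satisfies the piecewise functional equation of the operator `T`, the
functions `h_{ij}` take the data values at the corners of `E_{ij}`, and each
`s_{ij}` vanishes on `∂E_{ij}`, then `f` interpolates the data at every grid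
point: `f(x_i, y_j) = z_{ij}`. -/
theorem fixed_point_interpolates (n m : ℕ) (hn : 0 < n) (hm : 0 < m)
    (x : Fin (n + 1) → ℝ) (y : Fin (m + 1) → ℝ)
    (hx : StrictMono x) (hy : StrictMono y)
    (z : Fin (n + 1) → Fin (m + 1) → ℝ)
    (Lx' : Fin n → ℝ → ℝ) (Ly' : Fin m → ℝ → ℝ)
    (s g h : Fin n → Fin m → ℝ × ℝ → ℝ)
    -- s_{ij} vanishes on the boundary of E_{ij}
    (hsbdx : ∀ i j, ∀ b ∈ Icc (y j.castSucc) (y j.succ),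
      s i j (x i.castSucc, b) = 0 ∧ s i j (x i.succ, b) = 0)
    (hsbdy : ∀ i j, ∀ a ∈ Icc (x i.castSucc) (x i.succ),
      s i j (a, y j.castSucc) = 0 ∧ s i j (a, y j.succ) = 0)
    -- h_{ij} takes the data values at the four corners of E_{ij}
    (hhcorner : ∀ i j,
      h i j (x i.castSucc, y j.castSucc) = z i.castSucc j.castSucc ∧
      h i j (x i.succ, y j.castSucc) = z i.succ j.castSucc ∧
      h i j (x i.castSucc, y j.succ) = z i.castSucc j.succ ∧
      h i j (x i.succ, y j.succ) = z i.succ j.succ)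
    -- f satisfies the piecewise functional equation f = Tf
    (f : ℝ × ℝ → ℝ)
    (hfe : ∀ i j, ∀ p ∈ Icc (x i.castSucc) (x i.succ) ×ˢ Icc (y j.castSucc) (y j.succ),
      f p = s i j p * (f (Lx' i p.1, Ly' j p.2) - g i j (Lx' i p.1, Ly' j p.2)) +
        h i j p) :
    ∀ α β, f (x α, y β) = z α β := by
  intro α β
  obtain ⟨i, hi⟩ := exists_cast_or_succ hn α
  obtain ⟨j, hj⟩ := exists_cast_or_succ hm β
  have hxle : x i.castSucc ≤ x i.succ := hx.monotone (Fin.castSucc_lt_succ : i.castSucc < i.succ).le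
  have hyle : y j.castSucc ≤ y j.succ := hy.monotone (Fin.castSucc_lt_succ : j.castSucc < j.succ).le
  have hxmem : x α ∈ Icc (x i.castSucc) (x i.succ) := by
    rcases hi with rfl | rfl
    exacts [⟨le_refl _, hxle⟩, ⟨hxle, le_refl _⟩]
  have hymem : y β ∈ Icc (y j.castSucc) (y j.succ) := by
    rcases hj with rfl | rfl
    exacts [⟨le_refl _, hyle⟩, ⟨hyle, le_refl _⟩]
  have heq := hfe i j (x α, y β) ⟨hxmem, hymem⟩
  have hs : s i j (x α, y β) = 0 := by
    rcases hi with rfl | rfl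
    exacts [(hsbdx i j _ hymem).1, (hsbdx i j _ hymem).2]
  rw [heq, hs, zero_mul, zero_add]
  obtain ⟨c1, c2, c3, c4⟩ := hhcorner i j
  rcases hi with rfl | rfl <;> rcases hj with rfl | rfl <;>
    assumption
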